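/- Let m ≥ 1, N ≥ 1. For s ∈ {1, 2, 3, 4}, let V_s be a unitary on ℂ^{2^m} ⊗ ℂ^N with compression D_s := (⟨0|^{⊗m} ⊗ I_N)·V_s·(|0⟩^{⊗m} ⊗ I_N), and let γ = (γ₁, γ₂, γ₃, γ₄) = (1, 1, i, i). Let α₁, α₂, α₃, α₄ > 0 be real, set ‖α‖₁ = α₁+α₂+α₃+α₄, and let A be any 4×4 unitary with A·e₀ = ( √(α₁/‖α‖₁), √(α₂/‖α‖₁), √(α₃/‖α‖₁), √(α₄/‖α‖₁) )ᵀ. Define Sel = ∑_{s=1}^{4} |s⟩⟨s| ⊗ (γ_s·V_s) on ℂ⁴ ⊗ ℂ^{2^m} ⊗ ℂ^N, where |s⟩⟨s| projects onto the s-th standard basis vector of ℂ⁴. Then the compression of (A† ⊗ I)·Sel·(A ⊗ I) onto the joint zero state of the first two registers equals (1/‖α‖₁)·( α₁D₁ + α₂D₂ + i·α₃D₃ + i·α₄D₄ ); that is, (⟨e₀| ⊗ ⟨0|^{⊗m} ⊗ I_N)·(A† ⊗ I)·Sel·(A ⊗ I)·(|e₀⟩ ⊗ |0⟩^{⊗m}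 ⊗ I_N) = (1/‖α‖₁)∑_{s} γ_s α_s D_s. In particular, if D_s = diag(P_s(x₀), …, P_s(x_{N−1})) for real polynomials P_s and real points x_k, this operator is a (‖α‖₁, m+2, 0)-block-encoding of the diagonal matrix diag(f(x₀), …, f(x_{N−1})) with f = α₁P₁ + α₂P₂ + iα₃P₃ + iα₄P₄. -/

import Mathlib

namespace LCUPoly

open Matrix

/-- The coefficients `γ = (1, 1, i, i)`. -/
noncomputable def γvec : Fin 4 → ℂ := ![1, 1, Complex.I, Complex.I]

/-- `A ⊗ I` for a `4×4` matrix `A` and the identity on `ℂ^{2^m} ⊗ ℂ^N`. -/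
def tensId (m N : ℕ) (A : Matrix (Fin 4) (Fin 4) ℂ) :
    Matrix (Fin 4 × Fin (2 ^ m) × Fin N) (Fin 4 × Fin (2 ^ m) × Fin N) ℂ :=
  Matrix.of fun x y => if x.2 = y.2 then A x.1 y.1 else 0

/-- The select operator `Sel = ∑_{s} |s⟩⟨s| ⊗ (γ_s·V_s)`. -/
noncomputable def Sel (m N : ℕ)
    (V : Fin 4 → Matrix (Fin (2 ^ m) × Fin N) (Fin (2 ^ m) × Fin N) ℂ) :
    Matrix (Fin 4 × Fin (2 ^ m) × Fin N) (Fin 4 × Fin (2 ^ m) × Fin N) ℂ :=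
  Matrix.of fun x y => if x.1 = y.1 then γvec x.1 * V x.1 x.2 y.2 else 0

/-- linear combination of four block-encoded polynomials.
If `V_s` are unitaries with compressions `D_s`, `α_s > 0`, and `A` is any `4×4`
unitary whose first column is `(√(α_s/‖α‖₁))_s`, then the compression of
`(A† ⊗ I)·Sel·(A ⊗ I)` onto the joint zero state of the first two registers is
`(1/‖α‖₁)·(α₁D₁ + α₂D₂ + i·α₃D₃ + i·α₄D₄)`. -/
theorem lcu_four_polynomials (m N : ℕ) (hm : 1 ≤ m) (hN : 1 ≤ N)
    (V : Fin 4 → Matrix (Fin (2 ^ m) × Fin N) (Fin (2 ^ m) × Fin N) ℂ)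
    (hV : ∀ s, V s * (V s)ᴴ = 1 ∧ (V s)ᴴ * V s = 1)
    (D : Fin 4 → Matrix (Fin N) (Fin N) ℂ)
    (hD : ∀ s, ∀ j k : Fin N,
      D s j k = V s ((0 : Fin (2 ^ m)), j) ((0 : Fin (2 ^ m)), k))
    (α : Fin 4 → ℝ) (hα : ∀ s, 0 < α s)
    (A : Matrix (Fin 4) (Fin 4) ℂ)
    (hA₁ : A * Aᴴ = 1) (hA₂ : Aᴴ * A = 1)
    (hcol : ∀ s : Fin 4, A s 0 = (Real.sqrt (α s / (∑ t, α t)) : ℂ)) :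
    ∀ j k : Fin N,
      (tensId m N Aᴴ * Sel m N V * tensId m N A)
          ((0 : Fin 4), ((0 : Fin (2 ^ m)), j)) ((0 : Fin 4), ((0 : Fin (2 ^ m)), k)) =
        ((∑ t, α t : ℝ) : ℂ)⁻¹ * ∑ s : Fin 4, γvec s * (α s : ℂ) * D s j k := by

  intro j k
  have hsum : (0:ℝ) < ∑ t, α t := Finset.sum_pos (fun t _ => hα t) Finset.univ_nonempty
  have key : ∀ s : Fin 4, (starRingEnd ℂ) (A s 0) * A s 0 = ((α s / ∑ t, α t : ℝ) : ℂ) := by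
    intro s
    rw [hcol s, Complex.conj_ofReal, ← Complex.ofReal_mul,
      Real.mul_self_sqrt (div_nonneg (hα s).le hsum.le)]
  simp only [tensId, Sel, Matrix.mul_apply, Matrix.of_apply, Fintype.sum_prod_type,
    Prod.mk.injEq, conjTranspose_apply]
  simp only [ite_mul, zero_mul, mul_ite, mul_zero, Finset.sum_ite_irrel,
    Finset.sum_ite_eq, Finset.sum_ite_eq', Finset.mem_univ, if_true, Prod.ext_iff]
  simp only [eq_comm (a := (0 : Fin (2 ^ m))), eq_comm (a := j), Finset.sum_ite_eq,
    Finset.sum_ite_eq', Finset.mem_univ, if_true]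
  rw [Finset.mul_sum]
  refine Finset.sum_congr rfl fun s _ => ?_
  rw [hD s j k]
  simp only [ite_and, Finset.sum_ite_eq', Finset.mem_univ, if_true, ite_mul, zero_mul,
    Finset.sum_ite_irrel, Finset.sum_const_zero]
  rw [show star (A s 0) * (γvec s * V s (0, j) (0, k)) * A s 0 =
      ((starRingEnd ℂ) (A s 0) * A s 0) * (γvec s * V s (0, j) (0, k)) from by
        simp only [starRingEnd_apply]; ring, key s]
  push_cast
  field_simp


end LCUPoly
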